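/- (Duality of the model's and auditor's hypotheses.) Let s be an asymptotically consistent auditing strategy. Then the model's alternative and the limiting auditor's null are equivalent, and the model's null and the limiting auditor's alternative are equivalent; that is: (∃ S ∈ Sε, V S < q) ↔ (∃ τ ∈ ℕ, ∀ t ≥ τ, V (s t) < q), and (∀ S ∈ Sε, V S ≥ q) ↔ (∀ τ ∈ ℕ, ∃ t ≥ τ, V (s t) ≥ q). -/
import Mathlib

open Filter

/-- Duality of the model's and auditor's hypotheses: under an asymptotically consistent
auditing strategy, the model's alternative is equivalent to the limiting auditor's null,
and the model's null is equivalent to the limiting auditor's alternative. -/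
theorem duality_model_auditor
    {A : Type*} (V : A → ℝ) (q : ℝ) (Sε : Set A) (s : ℕ → A)
    (hs : ∀ t, s t ∈ Sε)
    (hconsistent : (∃ S ∈ Sε, V S < q) →
      ∃ L : ℝ, Tendsto (fun t => V (s t)) atTop (nhds L) ∧ L < q) :
    ((∃ S ∈ Sε, V S < q) ↔ (∃ τ : ℕ, ∀ t ≥ τ, V (s t) < q)) ∧
    ((∀ S ∈ Sε, V S ≥ q) ↔ (∀ τ : ℕ, ∃ t ≥ τ, V (s t) ≥ q)) := by
  have h1 : (∃ S ∈ Sε, V S < q) ↔ (∃ τ : ℕ, ∀ t ≥ τ, V (s t) < q) := by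
    constructor
    · intro h
      obtain ⟨L, hL, hLq⟩ := hconsistent h
      have := hL.eventually (eventually_lt_nhds hLq)
      exact eventually_atTop.mp this
    · rintro ⟨τ, hτ⟩
      exact ⟨s τ, hs τ, hτ τ le_rfl⟩
  refine ⟨h1, ?_⟩
  constructor
  · intro h τ
    refine ⟨τ, le_rfl, h _ (hs τ)⟩
  · intro h S hS
    by_contra hlt
    push_neg at hlt
    obtain ⟨τ, hτ⟩ := h1.mp ⟨S, hS, hlt⟩
    obtain ⟨t, ht, hge⟩ := h τ
    exact absurd hge (not_le.mpr (hτ t ht))
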